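/- Assume λ = 1 and the noiseless single-sensor model: there exist target positions ξ₁,…,ξ_K ∈ ℂ, a sensor position p ∈ ℂ, a constant velocity v̄ ∈ ℂ, and true biases Δρ̄, Δφ̄ ∈ ℝ such that ξ_{k+1} = ξ_k + T_k·v̄ for k = 1,…,K−1 and (ρ_k + Δρ̄)·exp(i(φ_k + Δφ̄)) = ξ_k − p for k = 1,…,K. Then: (i) for every Δφ ∈ ℝ, F(Δφ, Δρ̄, e^{i(Δφ−Δφ̄)}·v̄) = 0, so the optimal objective value is zero for every Δφ; and (ii) if moreover the linear map ℝ × ℂ → ℂ^{K−1} sending (a, w) to the vector with k-th component a·(exp(i(φ_{k+1}+Δφ)) − exp(i(φ_k+Δφ))) − T_k·w is injective, then every pair (Δρ, v) ∈ ℝ × ℂ with F(Δφ, Δρ, v) = 0 satisfies Δρ = Δρ̄; that is, the least-squares solution exactly recovers the true range bias for every choice of the azimuth bias Δφ. -/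

import Mathlib

/-- The index `k` (first of a consecutive pair) as an element of `Fin K`. -/
def loIdx {K : ℕ} (k : Fin (K - 1)) : Fin K := ⟨k.1, by have h := k.2; omega⟩

/-- The index `k+1` (second of a consecutive pair) as an element of `Fin K`. -/
def hiIdx {K : ℕ} (k : Fin (K - 1)) : Fin K := ⟨k.1 + 1, by have h := k.2; omega⟩

/-- The bias-corrected measurement `g_k(Δφ, Δρ) = λ⁻¹ (ρ_k + Δρ) exp(i(φ_k + Δφ)) ∈ ℂ`. -/
noncomputable def gmeas {K : ℕ} (ρ φ : Fin K → ℝ) (lam : ℝ) (Δφ Δρ : ℝ) (k : Fin K) : ℂ :=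
  ((lam⁻¹ * (ρ k + Δρ) : ℝ) : ℂ) * Complex.exp (Complex.I * ((φ k + Δφ : ℝ) : ℂ))

/-- The single-sensor least-squares objective
`F(Δφ, Δρ, v) = Σ_{k=1}^{K−1} |g_{k+1}(Δφ, Δρ) − g_k(Δφ, Δρ) − T_k v|²`. -/
noncomputable def Fobj {K : ℕ} (ρ φ : Fin K → ℝ) (T : Fin (K - 1) → ℝ) (lam : ℝ)
    (Δφ Δρ : ℝ) (v : ℂ) : ℝ :=
  ∑ k : Fin (K - 1),
    ‖gmeas ρ φ lam Δφ Δρ (hiIdx k) - gmeas ρ φ lam Δφ Δρ (loIdx k)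
      - (T k : ℂ) * v‖ ^ 2

/-- Corollary 1 (exact recovery of the range bias in the noiseless single-sensor case):
with `λ = 1`, if the target moves with constant velocity and the measurements are noiseless,
then (i) the objective value `F(Δφ, Δρ̄, e^{i(Δφ−Δφ̄)}v̄)` is zero for every azimuth bias `Δφ`,
and (ii) under an injectivity (full-rank) condition, any zero of `F(Δφ, ·, ·)` has range
bias equal to the true range bias `Δρ̄`. -/
theorem noiseless_single_sensor_exact_range_recovery
    (K : ℕ) (hK : 2 ≤ K) (ρ φ : Fin K → ℝ) (T : Fin (K - 1) → ℝ) (lam : ℝ) (hlam : lam = 1)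
    (ξ : Fin K → ℂ) (p vbar : ℂ) (Δρbar Δφbar : ℝ)
    (hmotion : ∀ k : Fin (K - 1), ξ (hiIdx k) = ξ (loIdx k) + (T k : ℂ) * vbar)
    (hmeas : ∀ k : Fin K,
      ((ρ k + Δρbar : ℝ) : ℂ) * Complex.exp (Complex.I * ((φ k + Δφbar : ℝ) : ℂ)) = ξ k - p) :
    (∀ Δφ : ℝ,
      Fobj ρ φ T lam Δφ Δρbar (Complex.exp (Complex.I * ((Δφ - Δφbar : ℝ) : ℂ)) * vbar) = 0) ∧
    (∀ Δφ : ℝ,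
      Function.Injective (fun aw : ℝ × ℂ => fun k : Fin (K - 1) =>
        (aw.1 : ℂ) * (Complex.exp (Complex.I * ((φ (hiIdx k) + Δφ : ℝ) : ℂ))
            - Complex.exp (Complex.I * ((φ (loIdx k) + Δφ : ℝ) : ℂ)))
          - (T k : ℂ) * aw.2) →
      ∀ (Δρ : ℝ) (v : ℂ), Fobj ρ φ T lam Δφ Δρ v = 0 → Δρ = Δρbar) := by
  subst hlam
  -- gmeas at the true range bias equals rotated true relative position
  have key : ∀ (Δφ : ℝ) (k : Fin K), gmeas ρ φ 1 Δφ Δρbar k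
      = Complex.exp (Complex.I * ((Δφ - Δφbar : ℝ) : ℂ)) * (ξ k - p) := by
    intro Δφ k
    rw [← hmeas k]
    unfold gmeas
    have h : Complex.I * ((φ k + Δφ : ℝ) : ℂ)
        = Complex.I * ((Δφ - Δφbar : ℝ) : ℂ) + Complex.I * ((φ k + Δφbar : ℝ) : ℂ) := by
      push_cast; ring
    rw [h, Complex.exp_add]
    push_cast
    ring
  -- termwise zero for the true parameters
  have hterm0 : ∀ (Δφ : ℝ) (k : Fin (K - 1)),
      gmeas ρ φ 1 Δφ Δρbar (hiIdx k) - gmeas ρ φ 1 Δφ Δρbar (loIdx k)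
        - (T k : ℂ) * (Complex.exp (Complex.I * ((Δφ - Δφbar : ℝ) : ℂ)) * vbar) = 0 := by
    intro Δφ k
    rw [key Δφ, key Δφ, hmotion k]
    ring
  constructor
  · intro Δφ
    unfold Fobj
    apply Finset.sum_eq_zero
    intro k _
    rw [hterm0 Δφ k]
    simp
  · intro Δφ hinj Δρ v hF
    -- every term of the sum is zero
    have hterm : ∀ k : Fin (K - 1),
        gmeas ρ φ 1 Δφ Δρ (hiIdx k) - gmeas ρ φ 1 Δφ Δρ (loIdx k) - (T k : ℂ) * v = 0 := by
      intro k
      have hnn : ∀ j ∈ (Finset.univ : Finset (Fin (K - 1))),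
          (0:ℝ) ≤ ‖gmeas ρ φ 1 Δφ Δρ (hiIdx j) - gmeas ρ φ 1 Δφ Δρ (loIdx j)
            - (T j : ℂ) * v‖ ^ 2 := by
        intro j _; positivity
      have := (Finset.sum_eq_zero_iff_of_nonneg hnn).mp hF k (Finset.mem_univ k)
      have habs : ‖gmeas ρ φ 1 Δφ Δρ (hiIdx k) - gmeas ρ φ 1 Δφ Δρ (loIdx k)
          - (T k : ℂ) * v‖ = 0 := by
        nlinarith [norm_nonneg (gmeas ρ φ 1 Δφ Δρ (hiIdx k)
          - gmeas ρ φ 1 Δφ Δρ (loIdx k) - (T k : ℂ) * v)]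
      exact norm_eq_zero.mp habs
    have hdiff : ∀ j : Fin K, gmeas ρ φ 1 Δφ Δρ j - gmeas ρ φ 1 Δφ Δρbar j
        = ((Δρ - Δρbar : ℝ) : ℂ) * Complex.exp (Complex.I * ((φ j + Δφ : ℝ) : ℂ)) := by
      intro j
      unfold gmeas
      push_cast
      ring
    set w : ℂ := v - Complex.exp (Complex.I * ((Δφ - Δφbar : ℝ) : ℂ)) * vbar with hw
    have heq : (fun aw : ℝ × ℂ => fun k : Fin (K - 1) =>
        (aw.1 : ℂ) * (Complex.exp (Complex.I * ((φ (hiIdx k) + Δφ : ℝ) : ℂ))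
            - Complex.exp (Complex.I * ((φ (loIdx k) + Δφ : ℝ) : ℂ)))
          - (T k : ℂ) * aw.2) (Δρ - Δρbar, w)
        = (fun aw : ℝ × ℂ => fun k : Fin (K - 1) =>
        (aw.1 : ℂ) * (Complex.exp (Complex.I * ((φ (hiIdx k) + Δφ : ℝ) : ℂ))
            - Complex.exp (Complex.I * ((φ (loIdx k) + Δφ : ℝ) : ℂ)))
          - (T k : ℂ) * aw.2) (0, 0) := by
      funext k
      simp only
      have h1 := hterm k
      have h2 := hterm0 Δφ k
      have d1 := hdiff (hiIdx k)
      have d2 := hdiff (loIdx k)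
      push_cast at d1 d2 ⊢
      linear_combination h1 - h2 - d1 + d2
    have := hinj heq
    have h1 : Δρ - Δρbar = (0:ℝ) := congrArg Prod.fst this
    linarith
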